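/- In Lorentz–Minkowski space E₁³, a C² regular non-lightlike unit-speed curve α that is not spherical is planar (its image lies in an affine plane) if and only if its normal development (κ₁(s), κ₂(s)) with respect to an RM frame lies on a straight line through the origin, i.e., there exist constants (a, b) ≠ (0,0) with aκ₁(s) + bκ₂(s) = 0 for all s. -/

import Mathlib

/-- The Lorentz–Minkowski inner product of index 1 on `ℝ³`. -/
noncomputable def mdot (x y : Fin 3 → ℝ) : ℝ := x 0 * y 0 + x 1 * y 1 - x 2 * y 2

lemma mdot_smul_left (r : ℝ) (x y : Fin 3 → ℝ) : mdot (r • x) y = r * mdot x y := by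
  simp [mdot]; ring

lemma mdot_add_left (x x' y : Fin 3 → ℝ) : mdot (x + x') y = mdot x y + mdot x' y := by
  simp [mdot]; ring

lemma mdot_zero_left (y : Fin 3 → ℝ) : mdot 0 y = 0 := by simp [mdot]

lemma mdot_comm (x y : Fin 3 → ℝ) : mdot x y = mdot y x := by simp [mdot]; ring

/-- derivative of `mdot (f s) u` for constant `u`. -/
lemma hasDerivAt_mdot_const (f : ℝ → Fin 3 → ℝ) (u : Fin 3 → ℝ)
    (hf : Differentiable ℝ f) (s : ℝ) :
    HasDerivAt (fun s => mdot (f s) u) (mdot (deriv f s) u) s := by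
  have hf' : HasDerivAt f (deriv f s) s := (hf s).hasDerivAt
  have hc : ∀ i, HasDerivAt (fun s => f s i) (deriv f s i) s :=
    fun i => hasDerivAt_pi.1 hf' i
  have h := (((hc 0).mul_const (u 0)).add ((hc 1).mul_const (u 1))).sub
      ((hc 2).mul_const (u 2))
  exact h

/-- vanishing of a vector orthogonal to the frame -/
lemma ortho_frame_eq_zero (T N₁ N₂ v : Fin 3 → ℝ) (ε ε₁ : ℝ) (hεε₁ : ε * ε₁ = -1)
    (hTT : mdot T T = ε) (h11 : mdot N₁ N₁ = ε₁) (h22 : mdot N₂ N₂ = 1)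
    (hT1 : mdot T N₁ = 0) (hT2 : mdot T N₂ = 0) (h12 : mdot N₁ N₂ = 0)
    (hvT : mdot T v = 0) (hv1 : mdot N₁ v = 0) (hv2 : mdot N₂ v = 0) : v = 0 := by
  classical
  set A : Matrix (Fin 3) (Fin 3) ℝ :=
    !![T 0, T 1, -T 2; N₁ 0, N₁ 1, -N₁ 2; N₂ 0, N₂ 1, -N₂ 2] with hA
  set B : Matrix (Fin 3) (Fin 3) ℝ :=
    !![T 0, N₁ 0, N₂ 0; T 1, N₁ 1, N₂ 1; T 2, N₁ 2, N₂ 2] with hB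
  have hAB : A * B = !![ε, 0, 0; 0, ε₁, 0; 0, 0, (1:ℝ)] := by
    simp only [mdot] at hTT h11 h22 hT1 hT2 h12
    ext i j
    fin_cases i <;> fin_cases j <;>
      simp [hA, hB, Matrix.mul_apply, Fin.sum_univ_three, Matrix.vecHead, Matrix.vecTail] <;> linarith
  have hdetAB : A.det * B.det = -1 := by
    have h := congrArg Matrix.det hAB
    rw [Matrix.det_mul] at h
    rw [h, Matrix.det_fin_three]
    simp
    linarith [hεε₁]
  have hdetA : A.det ≠ 0 := by
    intro h
    rw [h, zero_mul] at hdetAB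
    norm_num at hdetAB
  have hAv : A.mulVec v = 0 := by
    simp only [mdot] at hvT hv1 hv2
    funext i
    fin_cases i <;>
      simp [hA, Matrix.mulVec, dotProduct, Fin.sum_univ_three] <;> linarith
  exact Matrix.eq_zero_of_mulVec_eq_zero hdetA hAv

/-- In `E₁³`, a `C²` regular non-lightlike unit-speed curve which is not spherical is
planar iff its normal development `(κ₁, κ₂)` with respect to an RM frame lies on a
straight line through the origin. -/
theorem stmt13 (α t n₁ n₂ : ℝ → Fin 3 → ℝ) (κ₁ κ₂ : ℝ → ℝ) (ε ε₁ : ℝ)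
    (hε : ε = 1 ∨ ε = -1) (hε₁ : ε₁ = 1 ∨ ε₁ = -1) (hεε₁ : ε * ε₁ = -1)
    (hα : ContDiff ℝ 2 α)
    (ht : ∀ s, t s = deriv α s)
    (htt : ∀ s, mdot (t s) (t s) = ε)
    (hn₁n₁ : ∀ s, mdot (n₁ s) (n₁ s) = ε₁)
    (hn₂n₂ : ∀ s, mdot (n₂ s) (n₂ s) = 1)
    (htn₁ : ∀ s, mdot (t s) (n₁ s) = 0)
    (htn₂ : ∀ s, mdot (t s) (n₂ s) = 0)
    (hn₁n₂ : ∀ s, mdot (n₁ s) (n₂ s) = 0)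
    (hdiff₁ : Differentiable ℝ n₁) (hdiff₂ : Differentiable ℝ n₂)
    (hdt : ∀ s, deriv t s = (ε₁ * κ₁ s) • n₁ s + κ₂ s • n₂ s)
    (hdn₁ : ∀ s, deriv n₁ s = -(ε * κ₁ s) • t s)
    (hdn₂ : ∀ s, deriv n₂ s = -(ε * κ₂ s) • t s)
    (hnotsph : ∀ p : Fin 3 → ℝ, ¬ ∃ c : ℝ, ∀ s, mdot (α s - p) (α s - p) = c) :
    (∃ u : Fin 3 → ℝ, u ≠ 0 ∧ ∃ c : ℝ, ∀ s, mdot (α s) u = c) ↔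
      ∃ a b : ℝ, ¬(a = 0 ∧ b = 0) ∧ ∀ s, a * κ₁ s + b * κ₂ s = 0 := by
  have hε₁ne : ε₁ ≠ 0 := by rcases hε₁ with h | h <;> rw [h] <;> norm_num
  have hαd : Differentiable ℝ α := hα.differentiable two_ne_zero
  have hteq : t = deriv α := funext ht
  have htd : Differentiable ℝ t := by
    rw [hteq]
    have h2 : ContDiff ℝ (1 + 1) α := by exact_mod_cast hα
    exact ((contDiff_succ_iff_deriv.mp h2).2.2).differentiable one_ne_zero
  constructor
  · rintro ⟨u, hu, c, hc⟩
    -- first: mdot (t s) u = 0 for all s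
    have hTu : ∀ s, mdot (t s) u = 0 := by
      intro s
      have h1 : HasDerivAt (fun s => mdot (α s) u) (mdot (deriv α s) u) s :=
        hasDerivAt_mdot_const α u hαd s
      have h2 : (fun s => mdot (α s) u) = fun _ => c := funext hc
      rw [h2] at h1
      have := h1.deriv
      rw [deriv_const] at this
      rw [ht s, ← this]
    -- mdot (n₁ s) u constant
    have hconst : ∀ (f : ℝ → Fin 3 → ℝ), Differentiable ℝ f →
        (∀ s, ∃ r : ℝ, deriv f s = r • t s) → ∀ s, mdot (f s) u = mdot (f 0) u := by
      intro f hf hder s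
      refine is_const_of_deriv_eq_zero (fun x => (hasDerivAt_mdot_const f u hf x).differentiableAt)
        (fun x => ?_) s 0
      rw [(hasDerivAt_mdot_const f u hf x).deriv]
      obtain ⟨r, hr⟩ := hder x
      rw [hr, mdot_smul_left, hTu x, mul_zero]
    have hAconst : ∀ s, mdot (n₁ s) u = mdot (n₁ 0) u :=
      hconst n₁ hdiff₁ (fun s => ⟨-(ε * κ₁ s), hdn₁ s⟩)
    have hBconst : ∀ s, mdot (n₂ s) u = mdot (n₂ 0) u :=
      hconst n₂ hdiff₂ (fun s => ⟨-(ε * κ₂ s), hdn₂ s⟩)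
    set A := mdot (n₁ 0) u with hAdef
    set B := mdot (n₂ 0) u with hBdef
    refine ⟨ε₁ * A, B, ?_, ?_⟩
    · rintro ⟨ha, hb⟩
      have hA0 : A = 0 := by
        rcases mul_eq_zero.mp ha with h | h
        · exact absurd h hε₁ne
        · exact h
      apply hu
      exact ortho_frame_eq_zero (t 0) (n₁ 0) (n₂ 0) u ε ε₁ hεε₁ (htt 0) (hn₁n₁ 0) (hn₂n₂ 0)
        (htn₁ 0) (htn₂ 0) (hn₁n₂ 0) (hTu 0) hA0 hb
    · intro s
      have h1 : HasDerivAt (fun s => mdot (t s) u) (mdot (deriv t s) u) s :=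
        hasDerivAt_mdot_const t u htd s
      have h2 : (fun s => mdot (t s) u) = fun _ => (0:ℝ) := funext hTu
      rw [h2] at h1
      have h3 := h1.deriv
      rw [deriv_const] at h3
      rw [hdt s, mdot_add_left, mdot_smul_left, mdot_smul_left, hAconst s, hBconst s] at h3
      linarith
  · rintro ⟨a, b, hab, hκ⟩
    set U : ℝ → Fin 3 → ℝ := fun s => a • n₁ s + b • n₂ s with hU
    have hUd : Differentiable ℝ U := (hdiff₁.const_smul a).add (hdiff₂.const_smul b)
    have hUderiv : ∀ s, deriv U s = 0 := by
      intro s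
      have h1 : HasDerivAt U (a • deriv n₁ s + b • deriv n₂ s) s :=
        (((hdiff₁ s).hasDerivAt).const_smul a).add (((hdiff₂ s).hasDerivAt).const_smul b)
      rw [h1.deriv, hdn₁ s, hdn₂ s, smul_smul, smul_smul, ← add_smul]
      have : a * -(ε * κ₁ s) + b * -(ε * κ₂ s) = -ε * (a * κ₁ s + b * κ₂ s) := by ring
      rw [this, hκ s, mul_zero, zero_smul]
    have hUconst : ∀ s, U s = U 0 :=
      fun s => is_const_of_deriv_eq_zero hUd hUderiv s 0
    refine ⟨U 0, ?_, mdot (α 0) (U 0), ?_⟩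
    · intro h
      have h1 : mdot (n₁ 0) (U 0) = ε₁ * a := by
        rw [hU]; simp only []
        rw [mdot_comm, mdot_add_left, mdot_smul_left, mdot_smul_left, hn₁n₁ 0,
          mdot_comm (n₂ 0) (n₁ 0), hn₁n₂ 0]
        ring
      have h2 : mdot (n₂ 0) (U 0) = b := by
        rw [hU]; simp only []
        rw [mdot_comm, mdot_add_left, mdot_smul_left, mdot_smul_left, hn₂n₂ 0, hn₁n₂ 0]
        ring
      rw [h, mdot_comm, mdot_zero_left] at h1 h2
      apply hab
      constructor
      · have := h1.symm
        rcases mul_eq_zero.mp this with hh | hh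
        · exact absurd hh hε₁ne
        · exact hh
      · exact h2.symm
    · intro s
      refine is_const_of_deriv_eq_zero
        (fun x => (hasDerivAt_mdot_const α (U 0) hαd x).differentiableAt) (fun x => ?_) s 0
      rw [(hasDerivAt_mdot_const α (U 0) hαd x).deriv, ← ht x, ← hUconst x, hU]
      simp only []
      rw [mdot_comm, mdot_add_left, mdot_smul_left, mdot_smul_left,
        mdot_comm (n₁ x) (t x), mdot_comm (n₂ x) (t x), htn₁ x, htn₂ x]
      ring
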